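/- For every d \geq 2, if \lambda \in \mathbb{C} satisfies p_d(\lambda) = 0, then p_{d+1}(\lambda) \neq 0; that is, consecutive polynomials p_d and p_{d+1} share no common complex root. -/

import Mathlib

/-- The multinomial coefficient `(a+b+c)! / (a! b! c!)`. -/
def mult3 (a b c : ℕ) : ℕ := (a + b + c).factorial / (a.factorial * b.factorial * c.factorial)

/-- `P k n z = ∑_{b=0}^{⌊n/2⌋} multinomial(k+n-b; k, b, n-2b) z^b` evaluated at `z : ℂ`. -/
noncomputable def Pval (k n : ℕ) (z : ℂ) : ℂ :=
  ∑ b ∈ Finset.range (n / 2 + 1), (mult3 k b (n - 2 * b) : ℂ) * z ^ b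

open Polynomial Finset

lemma mult3_dvd (a b c : ℕ) : (a.factorial * b.factorial * c.factorial) ∣ (a+b+c).factorial := by
  calc a.factorial * b.factorial * c.factorial ∣ (a+b).factorial * c.factorial :=
        mul_dvd_mul_right (Nat.factorial_mul_factorial_dvd_factorial_add a b) _
    _ ∣ (a+b+c).factorial := Nat.factorial_mul_factorial_dvd_factorial_add (a+b) c

lemma mult3_spec (a b c : ℕ) :
    mult3 a b c * (a.factorial * b.factorial * c.factorial) = (a+b+c).factorial :=
  Nat.div_mul_cancel (mult3_dvd a b c)

lemma mult3_pos (a b c : ℕ) : 0 < mult3 a b c :=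
  Nat.div_pos (Nat.le_of_dvd (Nat.factorial_pos _) (mult3_dvd a b c))
    (by positivity)

lemma fact_ne (n : ℕ) : ((n.factorial : ℂ)) ≠ 0 :=
  Nat.cast_ne_zero.mpr (Nat.factorial_ne_zero n)

lemma mult3_cast (a b c : ℕ) :
    (mult3 a b c : ℂ) = ((a+b+c).factorial : ℂ) / (a.factorial * b.factorial * c.factorial) := by
  rw [eq_div_iff (mul_ne_zero (mul_ne_zero (fact_ne a) (fact_ne b)) (fact_ne c))]
  exact_mod_cast congrArg (Nat.cast : ℕ → ℂ) (mult3_spec a b c)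

lemma factC (e j : ℕ) :
    (2*(e:ℂ)+3*j+4) * ((j:ℂ)+1) * (mult3 (e+2*j+2) (j+1) e : ℂ)
      = ((e:ℂ)+2)*((e:ℂ)+1) * (mult3 (e+2*j+2) j (e+2) : ℂ) := by
  have hA : (mult3 (e+2*j+2) (j+1) e : ℂ)
      = ((2*e+3*j+3).factorial : ℂ) / ((e+2*j+2).factorial * (j+1).factorial * e.factorial) := by
    rw [mult3_cast, show (e+2*j+2)+(j+1)+e = 2*e+3*j+3 by ring]
  have hB : (mult3 (e+2*j+2) j (e+2) : ℂ)
      = ((2*e+3*j+4).factorial : ℂ) / ((e+2*j+2).factorial * j.factorial * (e+2).factorial) := by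
    rw [mult3_cast, show (e+2*j+2)+j+(e+2) = 2*e+3*j+4 by ring]
  have f1 : ((2*e+3*j+4).factorial : ℂ) = (2*(e:ℂ)+3*j+4) * ((2*e+3*j+3).factorial : ℂ) := by
    rw [show 2*e+3*j+4 = (2*e+3*j+3)+1 by ring, Nat.factorial_succ]; push_cast; ring
  have f2 : (((j+1)).factorial : ℂ) = ((j:ℂ)+1) * (j.factorial : ℂ) := by
    rw [Nat.factorial_succ]; push_cast; ring
  have f3 : ((e+2).factorial : ℂ) = ((e:ℂ)+2)*((e:ℂ)+1) * (e.factorial : ℂ) := by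
    rw [show e+2 = (e+1)+1 by ring, Nat.factorial_succ, Nat.factorial_succ]; push_cast; ring
  rw [hA, hB, f1, f2, f3]
  have h1 := fact_ne (2*e+3*j+3); have h2 := fact_ne (e+2*j+2); have h3 := fact_ne j
  have h4 := fact_ne e
  have n1 : (j:ℂ)+1 ≠ 0 := by exact_mod_cast (Nat.cast_ne_zero (R:=ℂ)).mpr (by omega : j+1 ≠ 0)
  have n2 : (e:ℂ)+1 ≠ 0 := by exact_mod_cast (Nat.cast_ne_zero (R:=ℂ)).mpr (by omega : e+1 ≠ 0)
  have n3 : (e:ℂ)+2 ≠ 0 := by exact_mod_cast (Nat.cast_ne_zero (R:=ℂ)).mpr (by omega : e+2 ≠ 0)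
  field_simp

lemma factB (f i : ℕ) :
    ((f:ℂ)+2*i+3) * (mult3 (f+2*i+3) (i+1) (f+1) : ℂ)
      = (3*(f:ℂ)+6) * (mult3 (f+2*i+2) i (f+2) : ℂ)
        + (4*(f:ℂ)+6*i+8) * (mult3 (f+2*i+2) (i+1) f : ℂ) := by
  have hA : (mult3 (f+2*i+3) (i+1) (f+1) : ℂ)
      = ((2*f+3*i+5).factorial : ℂ) / ((f+2*i+3).factorial * (i+1).factorial * (f+1).factorial) := by
    rw [mult3_cast, show (f+2*i+3)+(i+1)+(f+1) = 2*f+3*i+5 by ring]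
  have hB : (mult3 (f+2*i+2) i (f+2) : ℂ)
      = ((2*f+3*i+4).factorial : ℂ) / ((f+2*i+2).factorial * i.factorial * (f+2).factorial) := by
    rw [mult3_cast, show (f+2*i+2)+i+(f+2) = 2*f+3*i+4 by ring]
  have hC : (mult3 (f+2*i+2) (i+1) f : ℂ)
      = ((2*f+3*i+3).factorial : ℂ) / ((f+2*i+2).factorial * (i+1).factorial * f.factorial) := by
    rw [mult3_cast, show (f+2*i+2)+(i+1)+f = 2*f+3*i+3 by ring]
  have f1 : ((2*f+3*i+5).factorial : ℂ)
      = (2*(f:ℂ)+3*i+5) * (2*(f:ℂ)+3*i+4) * ((2*f+3*i+3).factorial : ℂ) := by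
    rw [show 2*f+3*i+5 = (2*f+3*i+4)+1 by ring, Nat.factorial_succ,
      show 2*f+3*i+4 = (2*f+3*i+3)+1 by ring, Nat.factorial_succ]; push_cast; ring
  have f2 : ((2*f+3*i+4).factorial : ℂ) = (2*(f:ℂ)+3*i+4) * ((2*f+3*i+3).factorial : ℂ) := by
    rw [show 2*f+3*i+4 = (2*f+3*i+3)+1 by ring, Nat.factorial_succ]; push_cast; ring
  have f3 : ((f+2*i+3).factorial : ℂ) = ((f:ℂ)+2*i+3) * ((f+2*i+2).factorial : ℂ) := by
    rw [show f+2*i+3 = (f+2*i+2)+1 by ring, Nat.factorial_succ]; push_cast; ring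
  have f4 : ((i+1).factorial : ℂ) = ((i:ℂ)+1) * (i.factorial : ℂ) := by
    rw [Nat.factorial_succ]; push_cast; ring
  have f5 : ((f+2).factorial : ℂ) = ((f:ℂ)+2)*((f:ℂ)+1) * (f.factorial : ℂ) := by
    rw [show f+2 = (f+1)+1 by ring, Nat.factorial_succ, Nat.factorial_succ]; push_cast; ring
  have f6 : ((f+1).factorial : ℂ) = ((f:ℂ)+1) * (f.factorial : ℂ) := by
    rw [Nat.factorial_succ]; push_cast; ring
  rw [hA, hB, hC]
  have h1 := fact_ne (2*f+3*i+3); have h2 := fact_ne (f+2*i+2); have h3 := fact_ne i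
  have h4 := fact_ne f; have h5 := fact_ne (i+1); have h6 := fact_ne (f+2)
  have h7 := fact_ne (f+1); have h8 := fact_ne (f+2*i+3); have h9 := fact_ne (2*f+3*i+4)
  have h10 := fact_ne (2*f+3*i+5)
  have n1 : (i:ℂ)+1 ≠ 0 := by exact_mod_cast (Nat.cast_ne_zero (R:=ℂ)).mpr (by omega : i+1 ≠ 0)
  have n2 : (f:ℂ)+1 ≠ 0 := by exact_mod_cast (Nat.cast_ne_zero (R:=ℂ)).mpr (by omega : f+1 ≠ 0)
  have n3 : (f:ℂ)+2 ≠ 0 := by exact_mod_cast (Nat.cast_ne_zero (R:=ℂ)).mpr (by omega : f+2 ≠ 0)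
  have n4 : (f:ℂ)+2*i+3 ≠ 0 := by
    exact_mod_cast (Nat.cast_ne_zero (R:=ℂ)).mpr (by omega : f+2*i+3 ≠ 0)
  field_simp
  rw [f1, f2, f3, f4, f5, f6]
  ring

lemma factBbd (i : ℕ) :
    (2*(i:ℂ)+2) * (mult3 (2*i+2) (i+1) 0 : ℂ) = 3 * (mult3 (2*i+1) i 1 : ℂ) := by
  have hA : (mult3 (2*i+2) (i+1) 0 : ℂ)
      = ((3*i+3).factorial : ℂ) / ((2*i+2).factorial * (i+1).factorial * (0).factorial) := by
    rw [mult3_cast, show (2*i+2)+(i+1)+0 = 3*i+3 by ring]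
  have hB : (mult3 (2*i+1) i 1 : ℂ)
      = ((3*i+2).factorial : ℂ) / ((2*i+1).factorial * i.factorial * (1).factorial) := by
    rw [mult3_cast, show (2*i+1)+i+1 = 3*i+2 by ring]
  have f1 : ((3*i+3).factorial : ℂ) = (3*(i:ℂ)+3) * ((3*i+2).factorial : ℂ) := by
    rw [show 3*i+3 = (3*i+2)+1 by ring, Nat.factorial_succ]; push_cast; ring
  have f2 : ((2*i+2).factorial : ℂ) = (2*(i:ℂ)+2) * ((2*i+1).factorial : ℂ) := by
    rw [show 2*i+2 = (2*i+1)+1 by ring, Nat.factorial_succ]; push_cast; ring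
  have f3 : ((i+1).factorial : ℂ) = ((i:ℂ)+1) * (i.factorial : ℂ) := by
    rw [Nat.factorial_succ]; push_cast; ring
  rw [hA, hB]
  have h1 := fact_ne (3*i+2); have h2 := fact_ne (2*i+1); have h3 := fact_ne i
  have h4 := fact_ne (3*i+3); have h5 := fact_ne (2*i+2); have h6 := fact_ne (i+1)
  have n1 : (i:ℂ)+1 ≠ 0 := by exact_mod_cast (Nat.cast_ne_zero (R:=ℂ)).mpr (by omega : i+1 ≠ 0)
  have n2 : 2*(i:ℂ)+2 ≠ 0 := by
    exact_mod_cast (Nat.cast_ne_zero (R:=ℂ)).mpr (by omega : 2*i+2 ≠ 0)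
  simp only [Nat.factorial_zero, Nat.factorial_one, Nat.cast_one]
  field_simp
  rw [f1, f2, f3]
  ring

lemma factB0 (d : ℕ) :
    (4*(d:ℂ)+2) * (mult3 d 0 d : ℂ) = ((d:ℂ)+1) * (mult3 (d+1) 0 (d+1) : ℂ) := by
  have hA : (mult3 d 0 d : ℂ)
      = ((2*d).factorial : ℂ) / (d.factorial * (0).factorial * d.factorial) := by
    rw [mult3_cast, show d+0+d = 2*d by ring]
  have hB : (mult3 (d+1) 0 (d+1) : ℂ)
      = ((2*d+2).factorial : ℂ) / ((d+1).factorial * (0).factorial * (d+1).factorial) := by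
    rw [mult3_cast, show (d+1)+0+(d+1) = 2*d+2 by ring]
  have f1 : ((2*d+2).factorial : ℂ) = (2*(d:ℂ)+2) * (2*(d:ℂ)+1) * ((2*d).factorial : ℂ) := by
    rw [show 2*d+2 = (2*d+1)+1 by ring, Nat.factorial_succ,
      show 2*d+1 = (2*d)+1 by ring, Nat.factorial_succ]; push_cast; ring
  have f2 : ((d+1).factorial : ℂ) = ((d:ℂ)+1) * (d.factorial : ℂ) := by
    rw [Nat.factorial_succ]; push_cast; ring
  rw [hA, hB]
  have h1 := fact_ne (2*d); have h2 := fact_ne d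
  have h3 := fact_ne (2*d+2); have h4 := fact_ne (d+1)
  have n1 : (d:ℂ)+1 ≠ 0 := by exact_mod_cast (Nat.cast_ne_zero (R:=ℂ)).mpr (by omega : d+1 ≠ 0)
  simp only [Nat.factorial_zero, Nat.cast_one]
  field_simp
  rw [f1, f2]
  ring

/-- The `b`-th coefficient of `p_d`, as a complex number. -/
noncomputable def Mc (d j : ℕ) : ℂ := if 2*j ≤ d then (mult3 d j (d - 2*j) : ℂ) else 0

lemma keyB0 (d : ℕ) : (4*(d:ℂ)+2) * Mc d 0 = ((d:ℂ)+1) * Mc (d+1) 0 := by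
  simp only [Mc, if_pos (by omega : 2*0 ≤ d), if_pos (by omega : 2*0 ≤ d+1)]
  rw [show d - 2*0 = d by omega, show d+1 - 2*0 = d+1 by omega]
  exact factB0 d

lemma keyB (d j : ℕ) (hj : 1 ≤ j) :
    6*((j:ℂ)-1) * Mc d (j-1) + 2*(j:ℂ) * Mc d j
      = 3*(d:ℂ) * Mc d (j-1) + (4*(d:ℂ)+2) * Mc d j - ((d:ℂ)+1) * Mc (d+1) j := by
  obtain ⟨i, rfl⟩ : ∃ i, j = i+1 := ⟨j-1, by omega⟩
  rw [show i+1-1 = i by omega]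
  rcases (by omega : 2*(i+1) ≤ d ∨ d = 2*i+1 ∨ d = 2*i ∨ d < 2*i) with h | h | h | h
  · obtain ⟨f, rfl⟩ : ∃ f, d = f+2*i+2 := ⟨d-2*i-2, by omega⟩
    simp only [Mc, if_pos (by omega : 2*i ≤ f+2*i+2), if_pos (by omega : 2*(i+1) ≤ f+2*i+2),
      if_pos (by omega : 2*(i+1) ≤ f+2*i+2+1)]
    rw [show f+2*i+2 - 2*i = f+2 by omega, show f+2*i+2 - 2*(i+1) = f by omega,
      show f+2*i+2+1 = f+2*i+3 by omega, show f+2*i+3 - 2*(i+1) = f+1 by omega]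
    push_cast
    linear_combination factB f i
  · subst h
    simp only [Mc, if_pos (by omega : 2*i ≤ 2*i+1), if_neg (by omega : ¬ 2*(i+1) ≤ 2*i+1),
      if_pos (by omega : 2*(i+1) ≤ 2*i+1+1)]
    rw [show 2*i+1 - 2*i = 1 by omega, show 2*i+1+1 = 2*i+2 by omega,
      show 2*i+2 - 2*(i+1) = 0 by omega]
    push_cast
    linear_combination factBbd i
  · subst h
    simp only [Mc, if_pos (by omega : 2*i ≤ 2*i), if_neg (by omega : ¬ 2*(i+1) ≤ 2*i),
      if_neg (by omega : ¬ 2*(i+1) ≤ 2*i+1)]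
    push_cast
    ring
  · simp only [Mc, if_neg (by omega : ¬ 2*i ≤ d), if_neg (by omega : ¬ 2*(i+1) ≤ d),
      if_neg (by omega : ¬ 2*(i+1) ≤ d+1)]
    ring

lemma keyC (d j : ℕ) :
    (2*(d:ℂ)-j)*((j:ℂ)+1) * Mc d (j+1) = ((d:ℂ)-2*j)*((d:ℂ)-2*j-1) * Mc d j := by
  rcases (by omega : 2*(j+1) ≤ d ∨ d = 2*j ∨ d = 2*j+1 ∨ d < 2*j) with h | h | h | h
  · obtain ⟨e, rfl⟩ : ∃ e, d = e+2*j+2 := ⟨d-2*j-2, by omega⟩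
    simp only [Mc, if_pos (by omega : 2*j ≤ e+2*j+2), if_pos (by omega : 2*(j+1) ≤ e+2*j+2)]
    rw [show e+2*j+2 - 2*j = e+2 by omega, show e+2*j+2 - 2*(j+1) = e by omega]
    push_cast
    linear_combination factC e j
  · subst h
    simp only [Mc, if_pos (by omega : 2*j ≤ 2*j), if_neg (by omega : ¬ 2*(j+1) ≤ 2*j)]
    push_cast
    ring
  · subst h
    simp only [Mc, if_pos (by omega : 2*j ≤ 2*j+1), if_neg (by omega : ¬ 2*(j+1) ≤ 2*j+1)]
    push_cast
    ring
  · simp only [Mc, if_neg (by omega : ¬ 2*j ≤ d), if_neg (by omega : ¬ 2*(j+1) ≤ d)]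
    ring

/-- `p_d` as a polynomial over `ℂ`. -/
noncomputable def Q (d : ℕ) : Polynomial ℂ :=
  ∑ b ∈ Finset.range (d/2+1), Polynomial.C (mult3 d b (d-2*b) : ℂ) * Polynomial.X ^ b

lemma Q_coeff (d n : ℕ) : (Q d).coeff n = Mc d n := by
  rw [Q, Polynomial.finset_sum_coeff]
  simp only [Polynomial.coeff_C_mul, Polynomial.coeff_X_pow, mul_ite, mul_one, mul_zero]
  rw [Finset.sum_ite_eq (Finset.range (d/2+1)) n]
  have hiff : n ∈ Finset.range (d/2+1) ↔ 2*n ≤ d := by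
    simp only [Finset.mem_range]; omega
  rw [Mc]
  by_cases hc : 2*n ≤ d
  · rw [if_pos (hiff.mpr hc), if_pos hc]
  · rw [if_neg (fun hm => hc (hiff.mp hm)), if_neg hc]

lemma Q_eval (d : ℕ) (z : ℂ) : (Q d).eval z = Pval d d z := by
  rw [Q, Pval, Polynomial.eval_finset_sum]
  simp

open Polynomial in
lemma polyB (d : ℕ) :
    C 6 * (derivative (Q d) * X^2) + C 2 * (derivative (Q d) * X^1)
      = C (3*(d:ℂ)) * (Q d * X^1) + (C (4*(d:ℂ)+2) * Q d - C ((d:ℂ)+1) * Q (d+1)) := by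
  ext n
  simp only [coeff_add, coeff_sub, coeff_C_mul, coeff_mul_X_pow', coeff_derivative, Q_coeff]
  rcases (by omega : n = 0 ∨ n = 1 ∨ 2 ≤ n) with rfl | rfl | hn
  · norm_num
    linear_combination - keyB0 d
  · norm_num
    linear_combination keyB d 1 (by norm_num)
  · rw [if_pos hn, if_pos (by omega : 1 ≤ n), if_pos (by omega : 1 ≤ n),
      show n-2+1 = n-1 by omega, show n-1+1 = n by omega]
    have hc : ((n-1:ℕ):ℂ) = (n:ℂ) - 1 := by
      have := Nat.cast_sub (by omega : 1 ≤ n) (R := ℂ); simpa using this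
    have hc2 : ((n-2:ℕ):ℂ) = (n:ℂ) - 2 := by
      have := Nat.cast_sub (by omega : 2 ≤ n) (R := ℂ); simpa using this
    rw [hc, hc2]
    linear_combination keyB d n (by omega)

open Polynomial in
lemma polyC (d : ℕ) :
    C 4 * (derivative (derivative (Q d)) * X^2) + C 1 * (derivative (derivative (Q d)) * X^1)
      = C (2*(2*(d:ℂ)-3)) * (derivative (Q d) * X^1)
        + (C (2*(d:ℂ)) * derivative (Q d) - C ((d:ℂ)*((d:ℂ)-1)) * Q d) := by
  ext n
  simp only [coeff_add, coeff_sub, coeff_C_mul, coeff_mul_X_pow', coeff_derivative, Q_coeff]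
  rcases (by omega : n = 0 ∨ n = 1 ∨ 2 ≤ n) with rfl | rfl | hn
  · norm_num
    linear_combination - keyC d 0
  · norm_num
    linear_combination - keyC d 1
  · rw [if_pos hn, if_pos (by omega : 1 ≤ n), if_pos (by omega : 1 ≤ n),
      show n-2+1 = n-1 by omega, show n-1+1 = n by omega]
    have hc : ((n-1:ℕ):ℂ) = (n:ℂ) - 1 := by
      have := Nat.cast_sub (by omega : 1 ≤ n) (R := ℂ); simpa using this
    have hc2 : ((n-2:ℕ):ℂ) = (n:ℂ) - 2 := by
      have := Nat.cast_sub (by omega : 2 ≤ n) (R := ℂ); simpa using this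
    rw [hc, hc2]
    linear_combination - keyC d n

lemma Mc0_ne (d : ℕ) : Mc d 0 ≠ 0 := by
  rw [Mc, if_pos (by omega : 2*0 ≤ d)]
  exact Nat.cast_ne_zero.mpr (mult3_pos d 0 (d - 2*0)).ne'

lemma Q_ne (d : ℕ) : Q d ≠ 0 := fun h =>
  Mc0_ne d (by rw [← Q_coeff, h, Polynomial.coeff_zero])

lemma Q_eval0 (d : ℕ) : (Q d).eval 0 ≠ 0 := by
  rw [← Polynomial.coeff_zero_eq_eval_zero, Q_coeff]; exact Mc0_ne d

lemma Q_third : ∀ d : ℕ, (Q d).eval (-1/3 : ℂ) ≠ 0 := by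
  intro d
  induction d with
  | zero =>
    rw [Q]
    norm_num [mult3]
  | succ d ih =>
    intro hq
    have hB := congrArg (Polynomial.eval (-1/3 : ℂ)) (polyB d)
    simp only [Polynomial.eval_add, Polynomial.eval_sub, Polynomial.eval_mul,
      Polynomial.eval_C, Polynomial.eval_pow, Polynomial.eval_X, hq] at hB
    have h2 : (3*(d:ℂ)+2) * Polynomial.eval (-1/3:ℂ) (Q d) = 0 := by
      linear_combination -hB
    rcases mul_eq_zero.mp h2 with h | h
    · have : ((3*d+2 : ℕ):ℂ) ≠ 0 := Nat.cast_ne_zero.mpr (by omega)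
      apply this; push_cast; linear_combination h
    · exact ih h

open Polynomial in
lemma deriv_pow_mul (a : ℂ) (k : ℕ) (w : Polynomial ℂ) :
    derivative ((X - C a)^(k+1) * w)
      = (X - C a)^k * (C ((k:ℂ)+1) * w + (X - C a) * derivative w) := by
  rw [derivative_mul, derivative_pow, derivative_X_sub_C, show k+1-1 = k by omega]
  push_cast
  ring

open Polynomial in
theorem stmt5' (d : ℕ) (hd : 2 ≤ d) (lam : ℂ) (h0 : (Q d).eval lam = 0)
    (h1 : (Q (d+1)).eval lam = 0) : False := by
  have hp : Q d ≠ 0 := Q_ne d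
  have hlam0 : lam ≠ 0 := by rintro rfl; exact Q_eval0 d h0
  have hlam3 : lam ≠ -1/3 := by rintro rfl; exact Q_third d h0
  have hune : (X - C lam : Polynomial ℂ) ≠ 0 := X_sub_C_ne_zero lam
  -- derivative of Q d vanishes at lam
  have hB := congrArg (Polynomial.eval lam) (polyB d)
  simp only [eval_add, eval_sub, eval_mul, eval_C, eval_pow, eval_X, h0, h1] at hB
  have hD0 : Polynomial.eval lam (derivative (Q d)) = 0 := by
    have hfac : Polynomial.eval lam (derivative (Q d)) * (2*lam*(3*lam+1)) = 0 := by
      linear_combination hB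
    rcases mul_eq_zero.mp hfac with h | h
    · exact h
    · rcases mul_eq_zero.mp h with h' | h'
      · exact absurd (by linear_combination h'/2) hlam0
      · exact absurd (by linear_combination h'/3) hlam3
  -- root multiplicity at least 2
  have hr1 : 1 ≤ rootMultiplicity lam (Q d) := (rootMultiplicity_pos hp).mpr h0
  have hfac0 : (X - C lam)^(rootMultiplicity lam (Q d)) * (Q d /ₘ (X - C lam)^(rootMultiplicity lam (Q d))) = Q d :=
    pow_mul_divByMonic_rootMultiplicity_eq (Q d) lam
  have hgne0 : Polynomial.eval lam (Q d /ₘ (X - C lam)^(rootMultiplicity lam (Q d))) ≠ 0 :=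
    eval_divByMonic_pow_rootMultiplicity_ne_zero lam hp
  have hr2 : 2 ≤ rootMultiplicity lam (Q d) := by
    by_contra hlt
    have he1 : rootMultiplicity lam (Q d) = 1 := by omega
    rw [he1, pow_one] at hfac0
    have hder := congrArg (Polynomial.eval lam) (congrArg derivative hfac0)
    rw [derivative_mul, derivative_X_sub_C] at hder
    simp only [eval_add, eval_mul, eval_sub, eval_X, eval_C, eval_one, one_mul, sub_self,
      zero_mul, add_zero, hD0] at hder
    rw [he1, pow_one] at hgne0
    exact hgne0 hder
  obtain ⟨s, hs⟩ : ∃ s, rootMultiplicity lam (Q d) = s+2 :=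
    ⟨rootMultiplicity lam (Q d) - 2, by omega⟩
  rw [hs] at hfac0 hgne0
  obtain ⟨g, hfac, hgne⟩ : ∃ g, (X - C lam)^(s+2) * g = Q d ∧ Polynomial.eval lam g ≠ 0 :=
    ⟨_, hfac0, hgne0⟩
  have hsne1 : ((s:ℂ)+1) ≠ 0 := by
    have : ((s+1 : ℕ):ℂ) ≠ 0 := Nat.cast_ne_zero.mpr (by omega)
    push_cast at this; exact this
  have hsne2 : ((s:ℂ)+2) ≠ 0 := by
    have : ((s+2 : ℕ):ℂ) ≠ 0 := Nat.cast_ne_zero.mpr (by omega)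
    push_cast at this; exact this
  -- first and second derivative factorizations
  have hD : derivative (Q d) = (X - C lam)^(s+1) * (C ((s:ℂ)+2) * g + (X - C lam) * derivative g) := by
    rw [← hfac, deriv_pow_mul]
    push_cast
    ring
  set w1 : Polynomial ℂ := C ((s:ℂ)+2) * g + (X - C lam) * derivative g with hw1def
  have hD2 : derivative (derivative (Q d)) = (X - C lam)^s * (C ((s:ℂ)+1) * w1 + (X - C lam) * derivative w1) := by
    rw [hD, deriv_pow_mul]
  set w2 : Polynomial ℂ := C ((s:ℂ)+1) * w1 + (X - C lam) * derivative w1 with hw2def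
  have hw1 : Polynomial.eval lam w1 = ((s:ℂ)+2) * Polynomial.eval lam g := by
    simp [hw1def]
  have hw2 : Polynomial.eval lam w2 = ((s:ℂ)+1) * Polynomial.eval lam w1 := by
    simp [hw2def]
  -- substitute into polyC
  have hpc := polyC d
  rw [hD2, hD, ← hfac] at hpc
  simp only [Polynomial.C_1, one_mul] at hpc
  have key : (X - C lam)^s * ((C 4 * X^2 + X) * w2)
      = (X - C lam)^s * ((X - C lam) * ((C (2*(2*(d:ℂ)-3)) * X + C (2*(d:ℂ))) * w1
          - C ((d:ℂ)*((d:ℂ)-1)) * ((X - C lam) * g))) := by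
    linear_combination hpc
  have key2 := mul_left_cancel₀ (pow_ne_zero s hune) key
  have hev := congrArg (Polynomial.eval lam) key2
  simp only [eval_add, eval_sub, eval_mul, eval_C, eval_pow, eval_X, sub_self, zero_mul] at hev
  -- hev : (4*lam^2 + lam) * eval lam w2 = 0
  have h4 : 4*lam+1 = 0 := by
    rcases mul_eq_zero.mp hev with h | h
    · have hll : lam * (4*lam+1) = 0 := by linear_combination h
      rcases mul_eq_zero.mp hll with h' | h'
      · exact absurd h' hlam0
      · exact h'
    · exfalso
      rw [hw2, hw1] at h
      rcases mul_eq_zero.mp h with h' | h'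
      · exact hsne1 h'
      · rcases mul_eq_zero.mp h' with h'' | h''
        · exact hsne2 h''
        · exact hgne h''
  -- second cancellation
  have hkey : (Polynomial.C 4 : Polynomial ℂ) * Polynomial.C lam + 1 = 0 := by
    have hc : Polynomial.C (4*lam+1) = (0 : Polynomial ℂ) := by rw [h4, map_zero]
    rw [map_add, map_mul, map_one] at hc
    exact hc
  have key2' : (X - C lam)^(s+1) * (C 4 * X * w2)
      = (X - C lam)^(s+1) * ((C (2*(2*(d:ℂ)-3)) * X + C (2*(d:ℂ))) * w1
          - C ((d:ℂ)*((d:ℂ)-1)) * ((X - C lam) * g)) := by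
    linear_combination key - ((X - C lam)^s * w2 * X) * hkey
  have key3 := mul_left_cancel₀ (pow_ne_zero (s+1) hune) key2'
  have hev2 := congrArg (Polynomial.eval lam) key3
  simp only [eval_add, eval_sub, eval_mul, eval_C, eval_pow, eval_X, sub_self, zero_mul,
    mul_zero, sub_zero] at hev2
  rw [hw2, hw1] at hev2
  -- hev2 : 4*(-(1/4))*((s+1)*((s+2)*gλ)) = (2*(2d-3)*(-(1/4)) + 2d)*((s+2)*gλ)
  have hz : (2*(s:ℂ)+2*(d:ℂ)+5) * (((s:ℂ)+2) * Polynomial.eval lam g) = 0 := by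
    linear_combination (-2 : ℂ) * hev2
      + (((s:ℂ)+2) * Polynomial.eval lam g * (2*(s:ℂ)-2*(d:ℂ)+5)) * h4
  rcases mul_eq_zero.mp hz with h | h
  · have : ((2*s+2*d+5 : ℕ):ℂ) ≠ 0 := Nat.cast_ne_zero.mpr (by omega)
    apply this; push_cast; linear_combination h
  · rcases mul_eq_zero.mp h with h' | h'
    · exact hsne2 h'
    · exact hgne h'


/-- Consecutive polynomials `p_d` and `p_{d+1}` share no common complex root. -/
theorem stmt5 (d : ℕ) (hd : 2 ≤ d) (lam : ℂ) (h0 : Pval d d lam = 0) :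
    Pval (d + 1) (d + 1) lam ≠ 0 := by
  intro h1
  rw [← Q_eval] at h0 h1
  exact stmt5' d hd lam h0 h1
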